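/- Suppose a finitely generated group Γ acts by algebraic automorphisms on a reduced irreducible affine complex variety M, and some point of M has a Zariski dense Γ-orbit. Then the set of points of M whose Γ-orbit is NOT Zariski dense is contained in a countable union of proper closed subvarieties of M. -/

import Mathlib

open MvPolynomial
open Module Submodule Matrix

lemma aux_det_nondense {K ι : Type*} [Field K] {r : ℕ} (w : Fin r → (ι → K))
    (hw : LinearIndependent K w) :
    ∃ γ : Fin r → ι, (Matrix.of fun i j => w i (γ j)).det ≠ 0 := by
  classical
  rcases eq_or_ne r 0 with rfl | hr0
  · exact ⟨Fin.elim0, by simp [Matrix.det_fin_zero]⟩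
  have hrpos : 0 < r := Nat.pos_of_ne_zero hr0
  have : Nonempty (Fin r) := Fin.pos_iff_nonempty.mp hrpos
  set V : Submodule K (ι → K) := Submodule.span K (Set.range w) with hV
  have hfd : FiniteDimensional K V := FiniteDimensional.span_of_finite K (Set.finite_range w)
  have hrank : finrank K V = r := by
    rw [hV, finrank_span_eq_card hw, Fintype.card_fin]
  have hmem : ∀ i, w i ∈ V := fun i => subset_span (Set.mem_range_self i)
  set v : Fin r → V := fun i => ⟨w i, hmem i⟩ with hv
  have hvind : LinearIndependent K v := by
    apply LinearIndependent.of_comp V.subtype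
    convert hw
    rfl
  -- basis of V from v
  have hcard : Fintype.card (Fin r) = finrank K V := by rw [Fintype.card_fin, hrank]
  let B : Basis (Fin r) K V := basisOfLinearIndependentOfCardEqFinrank hvind hcard
  have hB : ∀ i, (B i : ι → K) = w i := by
    intro i
    rw [coe_basisOfLinearIndependentOfCardEqFinrank]
  -- evaluation functionals
  set ε : ι → Module.Dual K V := fun γ => (LinearMap.proj γ).comp V.subtype with hε
  have hcoann : (span K (Set.range ε)).dualCoannihilator = ⊥ := by
    rw [eq_bot_iff]
    intro x hx
    rw [Submodule.mem_dualCoannihilator] at hx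
    have hz : ∀ γ : ι, (x : ι → K) γ = 0 := fun γ =>
      hx (ε γ) (subset_span (Set.mem_range_self γ))
    have : (x : ι → K) = 0 := funext hz
    simpa [Submodule.mem_bot] using Subtype.ext this
  have hspanfin : finrank K (span K (Set.range ε)) = r := by
    have h := Subspace.finrank_add_finrank_dualCoannihilator_eq (span K (Set.range ε))
    rw [hcoann, finrank_bot, hrank] at h
    omega
  obtain ⟨s, hs_sub, hs_span, hs_ind⟩ := exists_linearIndependent K (Set.range ε)
  have hsfin : s.Finite := by
    have : FiniteDimensional K (Module.Dual K V) := inferInstance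
    exact hs_ind.finite
  have : Fintype s := hsfin.fintype
  have hscard : Fintype.card s = r := by
    have h := finrank_span_set_eq_card hs_ind
    rw [hs_span, hspanfin] at h
    rw [← Set.toFinset_card, h]
  let e : Fin r ≃ s := (Fintype.equivFinOfCardEq hscard).symm
  have hg : ∀ j : Fin r, ∃ γ : ι, ε γ = ((e j : s) : Module.Dual K V) := by
    intro j
    obtain ⟨γ, hγ⟩ := hs_sub (e j).2
    exact ⟨γ, hγ⟩
  choose γ hγ using hg
  refine ⟨γ, ?_⟩
  intro hdet
  obtain ⟨c, hc0, hcA⟩ := Matrix.exists_mulVec_eq_zero_iff.mpr hdet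
  -- the functional
  have hAc : ∀ i, (∑ j, w i (γ j) * c j) = 0 := by
    intro i
    have h := congrFun hcA i
    simpa [Matrix.mulVec, dotProduct] using h
  have hφ : (∑ j, c j • ε (γ j)) = 0 := by
    apply B.ext
    intro i
    have h1 : (∑ j, c j • ε (γ j)) (B i) = ∑ j, c j * w i (γ j) := by
      simp [hε, LinearMap.sum_apply, LinearMap.smul_apply, hB i, smul_eq_mul]
    rw [h1]
    simp only [LinearMap.zero_apply]
    rw [← hAc i]
    exact Finset.sum_congr rfl fun j _ => mul_comm _ _
  -- independence of the chosen functionals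
  have hind : LinearIndependent K fun j : Fin r => ε (γ j) := by
    have h1 : LinearIndependent K fun j : Fin r => ((e j : s) : Module.Dual K V) :=
      hs_ind.comp e e.injective
    convert h1 using 1
    funext j
    rw [hγ j]
  rw [Fintype.linearIndependent_iff] at hind
  have := hind c hφ
  apply hc0
  funext j
  exact this j

/-- Let a finitely generated group `Γ` act by algebraic automorphisms on
an irreducible affine complex variety `M ⊆ ℂ^d`, and suppose some point of `M` has a
Zariski dense `Γ`-orbit.  Then the set of points of `M` whose `Γ`-orbit is not Zariski
dense is contained in a countable union of proper closed subvarieties of `M`. -/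
theorem nondense_orbits_in_countable_union
    {d : ℕ} {Γ : Type*} [Group Γ] (hΓ : Group.FG Γ)
    (M : Set (Fin d → ℂ))
    -- `M` is Zariski closed, cut out by the polynomials in `I`
    (I : Set (MvPolynomial (Fin d) ℂ))
    (hclosed : M = {x | ∀ p ∈ I, eval x p = 0})
    -- `M` is (reduced and) irreducible: nonempty with prime vanishing ideal
    (hne : M.Nonempty)
    (hirr : ∀ p q : MvPolynomial (Fin d) ℂ,
      (∀ x ∈ M, eval x p * eval x q = 0) →
      (∀ x ∈ M, eval x p = 0) ∨ (∀ x ∈ M, eval x q = 0))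
    -- `Γ` acts on `M` by automorphisms given by polynomial maps
    (act : Γ →* Equiv.Perm {x : Fin d → ℂ // x ∈ M})
    (halg : ∀ γ : Γ, ∃ F : Fin d → MvPolynomial (Fin d) ℂ,
      ∀ x : {x : Fin d → ℂ // x ∈ M},
        ((act γ x : {x : Fin d → ℂ // x ∈ M}) : Fin d → ℂ) =
          fun i => eval (x : Fin d → ℂ) (F i))
    -- some point has a Zariski dense orbit
    (hdense : ∃ x : {x : Fin d → ℂ // x ∈ M}, ∀ p : MvPolynomial (Fin d) ℂ,
      (∀ γ : Γ, eval ((act γ x : {x : Fin d → ℂ // x ∈ M}) : Fin d → ℂ) p = 0) →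
      ∀ y ∈ M, eval y p = 0) :
    -- then there is a countable family of proper closed subvarieties of `M`
    ∃ C : ℕ → Set (MvPolynomial (Fin d) ℂ),
      (∀ k : ℕ, ∃ x ∈ M, ∃ p ∈ C k, eval x p ≠ 0) ∧
      -- containing every point whose orbit is not Zariski dense
      (∀ x : {x : Fin d → ℂ // x ∈ M},
        ¬ (∀ p : MvPolynomial (Fin d) ℂ,
            (∀ γ : Γ, eval ((act γ x : {x : Fin d → ℂ // x ∈ M}) : Fin d → ℂ) p = 0) →
            ∀ y ∈ M, eval y p = 0) →
        ∃ k : ℕ, ∀ p ∈ C k, eval (x : Fin d → ℂ) p = 0) := by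
  classical
  open MvPolynomial in
  obtain ⟨x₀, hx₀⟩ := hdense
  choose F hF using halg
  have haev : ∀ (y : Fin d → ℂ) (q : MvPolynomial (Fin d) ℂ),
      MvPolynomial.aeval y q = MvPolynomial.eval y q := by
    intro y q
    rw [← MvPolynomial.coe_aeval_eq_eval]
    rfl
  have hsub : ∀ (γ : Γ) (x : {x : Fin d → ℂ // x ∈ M}) (p : MvPolynomial (Fin d) ℂ),
      MvPolynomial.eval (x : Fin d → ℂ) (MvPolynomial.bind₁ (F γ) p)
        = MvPolynomial.eval ((act γ x : {x : Fin d → ℂ // x ∈ M}) : Fin d → ℂ) p := by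
    intro γ x p
    rw [hF γ x, ← haev, ← haev, MvPolynomial.aeval_bind₁]
    congr 1
  -- the evaluation-along-the-orbit linear maps
  let S : ℕ → Submodule ℂ (MvPolynomial (Fin d) ℂ) :=
    fun n => MvPolynomial.restrictTotalDegree (Fin d) ℂ n
  let Φ : {x : Fin d → ℂ // x ∈ M} → (n : ℕ) → (S n →ₗ[ℂ] (Γ → ℂ)) :=
    fun x n => LinearMap.pi fun γ =>
      (MvPolynomial.aeval ((act γ x : {x : Fin d → ℂ // x ∈ M}) : Fin d → ℂ)).toLinearMap ∘ₗ
        (S n).subtype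
  have hΦ : ∀ (x : {x : Fin d → ℂ // x ∈ M}) (n : ℕ) (q : S n) (γ : Γ),
      Φ x n q γ = MvPolynomial.eval ((act γ x : {x : Fin d → ℂ // x ∈ M}) : Fin d → ℂ)
        (q : MvPolynomial (Fin d) ℂ) := by
    intro x n q γ
    simp only [Φ, LinearMap.pi_apply, LinearMap.comp_apply, Submodule.coe_subtype,
      AlgHom.toLinearMap_apply]
    rw [haev]
  have finS : ∀ n, FiniteDimensional ℂ (S n) := fun n => inferInstance
  let r : ℕ → ℕ := fun n => finrank ℂ (LinearMap.range (Φ x₀ n))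
  -- the countable family
  let C : ℕ → Set (MvPolynomial (Fin d) ℂ) := fun n =>
    { q | ∃ γ : Fin (r n) → Γ, ∃ p : Fin (r n) → S n,
        q = (Matrix.of fun i j => MvPolynomial.bind₁ (F (γ j)) ((p i : MvPolynomial (Fin d) ℂ))).det }
  -- evaluation of the determinant polynomials
  have hevaldet : ∀ (x : {x : Fin d → ℂ // x ∈ M}) (n : ℕ) (γ : Fin (r n) → Γ)
      (p : Fin (r n) → S n),
      MvPolynomial.eval (x : Fin d → ℂ)
          ((Matrix.of fun i j => MvPolynomial.bind₁ (F (γ j)) ((p i : MvPolynomial (Fin d) ℂ))).det)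
        = (Matrix.of fun i j => Φ x n (p i) (γ j)).det := by
    intro x n γ p
    rw [RingHom.map_det]
    congr 1
    funext i j
    simp only [RingHom.mapMatrix_apply, Matrix.map_apply, Matrix.of_apply]
    rw [hsub (γ j) x ((p i : MvPolynomial (Fin d) ℂ)), hΦ]
  -- kernels
  have hkermem : ∀ (x : {x : Fin d → ℂ // x ∈ M}) (n : ℕ) (q : S n),
      q ∈ LinearMap.ker (Φ x n) ↔
        ∀ γ : Γ, MvPolynomial.eval ((act γ x : {x : Fin d → ℂ // x ∈ M}) : Fin d → ℂ)
          (q : MvPolynomial (Fin d) ℂ) = 0 := by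
    intro x n q
    rw [LinearMap.mem_ker]
    constructor
    · intro h γ; rw [← hΦ x n q γ, h]; rfl
    · intro h; funext γ; rw [hΦ x n q γ, h γ]; rfl
  have hker₀ : ∀ (n : ℕ) (q : S n), q ∈ LinearMap.ker (Φ x₀ n) ↔
      ∀ y ∈ M, MvPolynomial.eval y (q : MvPolynomial (Fin d) ℂ) = 0 := by
    intro n q
    rw [hkermem]
    constructor
    · intro h; exact hx₀ _ h
    · intro h γ; exact h _ (act γ x₀).2
  refine ⟨C, ?_, ?_⟩
  · -- properness
    intro k
    refine ⟨(x₀ : Fin d → ℂ), x₀.2, ?_⟩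
    have hVfd : FiniteDimensional ℂ (LinearMap.range (Φ x₀ k)) := inferInstance
    let B : Basis (Fin (r k)) ℂ (LinearMap.range (Φ x₀ k)) :=
      Module.finBasisOfFinrankEq ℂ _ rfl
    let w : Fin (r k) → (Γ → ℂ) := fun i => ((B i : LinearMap.range (Φ x₀ k)) : Γ → ℂ)
    have hwind : LinearIndependent ℂ w := by
      have h := B.linearIndependent.map' (LinearMap.range (Φ x₀ k)).subtype
        (Submodule.ker_subtype _)
      exact h
    obtain ⟨γsel, hdet⟩ := aux_det_nondense w hwind
    have hpre : ∀ i, ∃ q : S k, Φ x₀ k q = w i := by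
      intro i
      obtain ⟨q, hq⟩ := (B i).2
      exact ⟨q, hq⟩
    choose p hp using hpre
    refine ⟨_, ⟨γsel, p, rfl⟩, ?_⟩
    rw [hevaldet x₀ k γsel p]
    have : (Matrix.of fun i j => Φ x₀ k (p i) (γsel j))
        = (Matrix.of fun i j => w i (γsel j)) := by
      funext i j
      simp only [Matrix.of_apply]
      rw [hp i]
    rw [this]
    exact hdet
  · -- containment of non-dense points
    intro x hx
    push_neg at hx
    obtain ⟨p, hporb, y, hyM, hyp⟩ := hx
    refine ⟨p.totalDegree, ?_⟩
    set n := p.totalDegree with hn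
    have hple : (p ∈ S n) := by
      rw [MvPolynomial.mem_restrictTotalDegree]
    let pel : S n := ⟨p, hple⟩
    -- kernel comparison
    have hle : LinearMap.ker (Φ x₀ n) ≤ LinearMap.ker (Φ x n) := by
      intro q hq
      rw [hkermem]
      intro γ
      exact (hker₀ n q).mp hq _ (act γ x).2
    have hlt : LinearMap.ker (Φ x₀ n) < LinearMap.ker (Φ x n) := by
      refine lt_of_le_of_ne hle ?_
      intro heq
      have h1 : pel ∈ LinearMap.ker (Φ x n) := (hkermem x n pel).mpr hporb
      rw [← heq] at h1
      exact hyp ((hker₀ n pel).mp h1 y hyM)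
    have hrlt : finrank ℂ (LinearMap.range (Φ x n)) < r n := by
      have h1 := LinearMap.finrank_range_add_finrank_ker (Φ x n)
      have h2 := LinearMap.finrank_range_add_finrank_ker (Φ x₀ n)
      have h3 : finrank ℂ (LinearMap.ker (Φ x₀ n)) < finrank ℂ (LinearMap.ker (Φ x n)) :=
        Submodule.finrank_lt_finrank_of_lt hlt
      have hr : r n = finrank ℂ (LinearMap.range (Φ x₀ n)) := rfl
      omega
    intro q hq
    obtain ⟨γsel, ps, rfl⟩ := hq
    rw [hevaldet x n γsel ps]
    -- show the vectors are dependent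
    have hnotind : ¬ LinearIndependent ℂ (fun i : Fin (r n) =>
        (⟨Φ x n (ps i), LinearMap.mem_range_self _ _⟩ : LinearMap.range (Φ x n))) := by
      intro hind
      have hcardle := hind.fintype_card_le_finrank
      rw [Fintype.card_fin] at hcardle
      omega
    obtain ⟨c, hcsum, i₀, hi₀⟩ := Fintype.not_linearIndependent_iff.mp hnotind
    refine Matrix.exists_vecMul_eq_zero_iff.mp ⟨c, ?_, ?_⟩
    · intro h; exact hi₀ (congrFun h i₀)
    · have hcsum' : (∑ i, c i • Φ x n (ps i)) = 0 := by
        have := congrArg (Subtype.val) hcsum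
        simpa using this
      funext j
      have := congrFun hcsum' (γsel j)
      simpa [Matrix.vecMul, dotProduct, Finset.sum_apply, smul_eq_mul] using this
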